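/- Suppose all attributes are binary (C i = 2 for all i). Then the maximum of ∑_{b ∈ O} r(b) over attribute hiding schemes O in which every bundle has at most one hidden attribute equals the maximum weight of a matching in the following weighted graph: the vertices are the instantiations in Ω, two instantiations ω, ω' are joined by an edge iff they differ in exactly one coordinate, and the weight of such an edge is r(b_{ω,ω'}), where b_{ω,ω'} is the unique natural bundle whose member set is {ω, ω'}; a matching is a finite set of pairwise disjoint edges, and its weight is the sum of its edge weights. -/

import Mathlib

/-- A natural bundle over `k` binary attributes: each attribute either takes a specific
value (`some a`) or is hidden (`none`). -/
abbrev Bund (k : ℕ) := Fin k → Option (Fin 2)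

/-- The set of instantiations belonging to a natural bundle. -/
def members {k : ℕ} (b : Bund k) : Finset (Fin k → Fin 2) :=
  Finset.univ.filter fun ω => ∀ i, b i = none ∨ b i = some (ω i)

/-- An attribute hiding scheme: a finite set of natural bundles with pairwise disjoint
member sets. -/
def IsScheme {k : ℕ} (O : Finset (Bund k)) : Prop :=
  ∀ b ∈ O, ∀ b' ∈ O, b ≠ b' → Disjoint (members b) (members b')

/-- The pairs of distinct bidders. -/
def pairs (n : ℕ) : Finset (Fin n × Fin n) := Finset.univ.filter fun p => p.1 ≠ p.2

theorem pairs_nonempty {n : ℕ} (hn : 2 ≤ n) : (pairs n).Nonempty := by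
  refine ⟨(⟨0, by omega⟩, ⟨1, by omega⟩), ?_⟩
  simp only [pairs, Finset.mem_filter, Finset.mem_univ, true_and]
  intro h
  simpa using congrArg Fin.val h

/-- The second price of a bundle of instantiations: the max over pairs of distinct
bidders of the min of the two bidders' (additive) values for the bundle. -/
noncomputable def sp {n : ℕ} (hn : 2 ≤ n) {Ω : Type*} (v : Fin n → Ω → ℝ) (B : Finset Ω) : ℝ :=
  (pairs n).sup' (pairs_nonempty hn) fun p => min (∑ ω ∈ B, v p.1 ω) (∑ ω ∈ B, v p.2 ω)

/-- The unit bundle of an instantiation `ω`: no attribute is hidden. -/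
def unitB {k : ℕ} (ω : Fin k → Fin 2) : Bund k := fun i => some (ω i)

/-- The marginal revenue `r b`: the extra revenue obtained by selling `b` as a bundle
rather than selling its instantiations separately. -/
noncomputable def rMarg {k : ℕ} {n : ℕ} (hn : 2 ≤ n)
    (v : Fin n → (Fin k → Fin 2) → ℝ) (b : Bund k) : ℝ :=
  sp hn v (members b) - ∑ ω ∈ members b, sp hn v (members (unitB ω))

/-- `bOf ω ω'`: for two instantiations differing in exactly one coordinate, the unique
natural bundle whose member set is `{ω, ω'}`. -/
def bOf {k : ℕ} (ω ω' : Fin k → Fin 2) : Bund k :=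
  fun i => if ω i = ω' i then some (ω i) else none

/-- A matching in the graph whose vertices are the instantiations and whose edges join
instantiations differing in exactly one coordinate: a finite set of such edges (recorded
as ordered pairs) whose vertex sets are pairwise disjoint. -/
def IsMatching {k : ℕ} (M : Finset ((Fin k → Fin 2) × (Fin k → Fin 2))) : Prop :=
  (∀ p ∈ M, p.1 ≠ p.2 ∧ (Finset.univ.filter fun i => p.1 i ≠ p.2 i).card = 1) ∧
  ∀ p ∈ M, ∀ q ∈ M, p ≠ q → Disjoint ({p.1, p.2} : Finset (Fin k → Fin 2)) {q.1, q.2}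

/-- For binary attributes, the maximum of `∑_{b ∈ O} r b` over attribute hiding schemes
in which every bundle has at most one hidden attribute equals the maximum weight of a
matching, where the edge between instantiations `ω, ω'` differing in exactly one
coordinate has weight `r (b_{ω,ω'})`. -/
lemma fin2_cases : ∀ a b c : Fin 2, a ≠ b → c = a ∨ c = b := by decide

lemma members_bOf {k : ℕ} (ω1 ω2 : Fin k → Fin 2)
    (h : (Finset.univ.filter fun i => ω1 i ≠ ω2 i).card = 1) :
    members (bOf ω1 ω2) = {ω1, ω2} := by
  classical
  obtain ⟨i0, hi0⟩ := Finset.card_eq_one.mp h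
  have hdiff : ∀ i, ω1 i ≠ ω2 i ↔ i = i0 := by
    intro i
    constructor
    · intro hi
      have : i ∈ Finset.univ.filter fun i => ω1 i ≠ ω2 i :=
        Finset.mem_filter.mpr ⟨Finset.mem_univ i, hi⟩
      rw [hi0] at this; simpa using this
    · intro hi
      have h2 : i ∈ Finset.univ.filter fun j => ω1 j ≠ ω2 j := by
        rw [hi0, Finset.mem_singleton]; exact hi
      exact (Finset.mem_filter.mp h2).2
  ext ω
  simp only [members, Finset.mem_filter, Finset.mem_univ, true_and, Finset.mem_insert,
    Finset.mem_singleton]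
  constructor
  · intro hmem
    have key : ∀ i, ω1 i = ω2 i → ω i = ω1 i := by
      intro i hi
      have h3 := hmem i
      simp only [bOf] at h3
      rw [if_pos hi] at h3
      rcases h3 with h' | h'
      · exact absurd h' (by simp)
      · exact (Option.some_injective _ h').symm
    by_cases hc : ω i0 = ω1 i0
    · left; funext i
      by_cases hi : i = i0
      · rw [hi]; exact hc
      · exact key i (not_not.mp fun hne => hi ((hdiff i).mp hne))
    · right; funext i
      by_cases hi : i = i0
      · rw [hi]
        have h12 : ω1 i0 ≠ ω2 i0 := (hdiff i0).mpr rfl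
        rcases fin2_cases (ω1 i0) (ω2 i0) (ω i0) h12 with h' | h'
        · exact absurd h' hc
        · exact h'
      · have heq := not_not.mp fun hne => hi ((hdiff i).mp hne)
        rw [key i heq, heq]
  · intro hω i
    by_cases hi : ω1 i = ω2 i
    · rcases hω with rfl | rfl <;> simp [bOf, hi]
    · simp [bOf, hi]

lemma filter_none_bOf {k : ℕ} (ω1 ω2 : Fin k → Fin 2) :
    (Finset.univ.filter fun i => bOf ω1 ω2 i = none)
      = Finset.univ.filter fun i => ω1 i ≠ ω2 i := by
  ext i; by_cases h : ω1 i = ω2 i <;> simp [bOf, h]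

lemma members_unitB {k : ℕ} (ω : Fin k → Fin 2) : members (unitB ω) = {ω} := by
  ext ω'
  simp only [members, Finset.mem_filter, Finset.mem_univ, true_and,
    Finset.mem_singleton]
  simp only [unitB]
  constructor
  · intro h
    funext i
    rcases h i with h' | h'
    · exact absurd h' (by simp)
    · exact (Option.some_injective _ h').symm
  · rintro rfl i; right; rfl

lemma rMarg_unit {k n : ℕ} (hn : 2 ≤ n) (v : Fin n → (Fin k → Fin 2) → ℝ)
    (ω : Fin k → Fin 2) : rMarg hn v (unitB ω) = 0 := by
  simp [rMarg, members_unitB]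

lemma eq_unitB {k : ℕ} (b : Bund k)
    (h : (Finset.univ.filter fun i => b i = none).card = 0) :
    ∃ ω, b = unitB ω := by
  classical
  refine ⟨fun i => (b i).getD 0, funext fun i => ?_⟩
  have hi : b i ≠ none := by
    intro hnone
    have : i ∈ Finset.univ.filter fun i => b i = none :=
      Finset.mem_filter.mpr ⟨Finset.mem_univ i, hnone⟩
    rw [Finset.card_eq_zero.mp h] at this; simp at this
  cases hb : b i with
  | none => exact absurd hb hi
  | some a => simp [unitB, hb]

lemma one_none' {k : ℕ} (b : Bund k)
    (h : (Finset.univ.filter fun i => b i = none).card = 1) :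
    (Finset.univ.filter fun i =>
        (fun j => (b j).getD 0) i ≠ (fun j => (b j).getD 1) i).card = 1 ∧
    bOf (fun j => (b j).getD 0) (fun j => (b j).getD 1) = b := by
  classical
  have hset : (Finset.univ.filter fun i =>
      (fun j => (b j).getD 0) i ≠ (fun j => (b j).getD 1) i)
      = Finset.univ.filter fun i => b i = none := by
    ext i
    cases hb : b i <;> simp [hb]
  constructor
  · rw [hset, h]
  · funext j
    cases hb : b j with
    | none => simp [bOf, hb]
    | some a => simp [bOf, hb]

lemma matching_to_scheme {k n : ℕ} (hn : 2 ≤ n) (v : Fin n → (Fin k → Fin 2) → ℝ)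
    (M : Finset ((Fin k → Fin 2) × (Fin k → Fin 2))) (hM : IsMatching M) :
    ∃ O : Finset (Bund k), IsScheme O ∧
      (∀ b ∈ O, (Finset.univ.filter fun i => b i = none).card ≤ 1) ∧
      ∑ b ∈ O, rMarg hn v b = ∑ p ∈ M, rMarg hn v (bOf p.1 p.2) := by
  classical
  have hmem : ∀ p ∈ M, members (bOf p.1 p.2) = {p.1, p.2} := fun p hp =>
    members_bOf p.1 p.2 (hM.1 p hp).2
  have hinj : ∀ p ∈ M, ∀ q ∈ M, bOf p.1 p.2 = bOf q.1 q.2 → p = q := by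
    intro p hp q hq heq
    by_contra hne
    have hd := hM.2 p hp q hq hne
    have : ({p.1, p.2} : Finset (Fin k → Fin 2)) = {q.1, q.2} := by
      rw [← hmem p hp, ← hmem q hq, heq]
    rw [this] at hd
    have := disjoint_self.mp hd
    have hq1 : q.1 ∈ ({q.1, q.2} : Finset (Fin k → Fin 2)) := by simp
    rw [this] at hq1; simp at hq1
  refine ⟨M.image fun p => bOf p.1 p.2, ?_, ?_, ?_⟩
  · intro b hb b' hb' hne
    obtain ⟨p, hp, rfl⟩ := Finset.mem_image.mp hb
    obtain ⟨q, hq, rfl⟩ := Finset.mem_image.mp hb'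
    have hpq : p ≠ q := fun h => hne (by rw [h])
    rw [hmem p hp, hmem q hq]
    exact hM.2 p hp q hq hpq
  · intro b hb
    obtain ⟨p, hp, rfl⟩ := Finset.mem_image.mp hb
    rw [filter_none_bOf, (hM.1 p hp).2]
  · exact Finset.sum_image hinj

lemma scheme_to_matching {k n : ℕ} (hn : 2 ≤ n) (v : Fin n → (Fin k → Fin 2) → ℝ)
    (O : Finset (Bund k)) (hO : IsScheme O)
    (hc : ∀ b ∈ O, (Finset.univ.filter fun i => b i = none).card ≤ 1) :
    ∃ M : Finset ((Fin k → Fin 2) × (Fin k → Fin 2)), IsMatching M ∧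
      ∑ p ∈ M, rMarg hn v (bOf p.1 p.2) = ∑ b ∈ O, rMarg hn v b := by
  classical
  set O1 := O.filter (fun b => (Finset.univ.filter fun i => b i = none).card = 1) with hO1
  set e : Bund k → (Fin k → Fin 2) × (Fin k → Fin 2) :=
    fun b => (fun j => (b j).getD 0, fun j => (b j).getD 1) with he
  have hkey : ∀ b ∈ O1, (Finset.univ.filter fun i => (e b).1 i ≠ (e b).2 i).card = 1
      ∧ bOf (e b).1 (e b).2 = b := by
    intro b hb
    exact one_none' b (Finset.mem_filter.mp hb).2
  have hmem1 : ∀ b ∈ O1, members b = {(e b).1, (e b).2} := by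
    intro b hb
    have h4 := members_bOf (e b).1 (e b).2 (hkey b hb).1
    rwa [(hkey b hb).2] at h4
  have hinj : ∀ b ∈ O1, ∀ b' ∈ O1, e b = e b' → b = b' := by
    intro b hb b' hb' heq
    rw [← (hkey b hb).2, ← (hkey b' hb').2, heq]
  refine ⟨O1.image e, ⟨?_, ?_⟩, ?_⟩
  · intro p hp
    obtain ⟨b, hb, rfl⟩ := Finset.mem_image.mp hp
    refine ⟨?_, (hkey b hb).1⟩
    intro hfst
    have : (Finset.univ.filter fun i => (e b).1 i ≠ (e b).2 i).card = 0 := by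
      rw [Finset.card_eq_zero, Finset.filter_eq_empty_iff]
      intro i _
      simp only [ne_eq, not_not]
      exact congrFun hfst i
    rw [(hkey b hb).1] at this; omega
  · intro p hp q hq hne
    obtain ⟨b, hb, rfl⟩ := Finset.mem_image.mp hp
    obtain ⟨b', hb', rfl⟩ := Finset.mem_image.mp hq
    have hbb : b ≠ b' := fun h => hne (by rw [h])
    rw [← hmem1 b hb, ← hmem1 b' hb']
    exact hO b (Finset.mem_filter.mp hb).1 b' (Finset.mem_filter.mp hb').1 hbb
  · rw [Finset.sum_image hinj]
    have h1 : ∀ b ∈ O1, rMarg hn v (bOf (e b).1 (e b).2) = rMarg hn v b := by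
      intro b hb; rw [(hkey b hb).2]
    rw [Finset.sum_congr rfl h1]
    apply Finset.sum_subset (Finset.filter_subset _ _)
    intro b hb hb1
    have h0 : (Finset.univ.filter fun i => b i = none).card = 0 := by
      have := hc b hb
      have h2 : ¬(Finset.univ.filter fun i => b i = none).card = 1 := by
        intro h1'
        exact hb1 (Finset.mem_filter.mpr ⟨hb, h1'⟩)
      omega
    obtain ⟨ω, rfl⟩ := eq_unitB b h0
    exact rMarg_unit hn v ω

theorem stmt14 (k : ℕ) (n : ℕ) (hn : 2 ≤ n) (v : Fin n → (Fin k → Fin 2) → ℝ) :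
    ∃ x : ℝ,
      ((∃ O : Finset (Bund k), IsScheme O ∧
          (∀ b ∈ O, (Finset.univ.filter fun i => b i = none).card ≤ 1) ∧
          ∑ b ∈ O, rMarg hn v b = x) ∧
        (∀ O : Finset (Bund k), IsScheme O →
          (∀ b ∈ O, (Finset.univ.filter fun i => b i = none).card ≤ 1) →
          ∑ b ∈ O, rMarg hn v b ≤ x)) ∧
      ((∃ M : Finset ((Fin k → Fin 2) × (Fin k → Fin 2)), IsMatching M ∧
          ∑ p ∈ M, rMarg hn v (bOf p.1 p.2) = x) ∧
        (∀ M : Finset ((Fin k → Fin 2) × (Fin k → Fin 2)), IsMatching M →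
          ∑ p ∈ M, rMarg hn v (bOf p.1 p.2) ≤ x)) := by
  classical
  set S : Finset ℝ := (Finset.univ.filter fun O : Finset (Bund k) =>
      IsScheme O ∧ ∀ b ∈ O, (Finset.univ.filter fun i => b i = none).card ≤ 1).image
      (fun O => ∑ b ∈ O, rMarg hn v b) with hS
  have hSne : S.Nonempty := by
    refine ⟨∑ b ∈ (∅ : Finset (Bund k)), rMarg hn v b, Finset.mem_image.mpr ⟨∅, ?_, rfl⟩⟩
    simp only [Finset.mem_filter, Finset.mem_univ, true_and]
    exact ⟨fun b hb => absurd hb (by simp), fun b hb => absurd hb (by simp)⟩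
  set x := S.max' hSne with hx
  have hub : ∀ O : Finset (Bund k), IsScheme O →
      (∀ b ∈ O, (Finset.univ.filter fun i => b i = none).card ≤ 1) →
      ∑ b ∈ O, rMarg hn v b ≤ x := by
    intro O h1 h2
    apply S.le_max'
    exact Finset.mem_image.mpr ⟨O, Finset.mem_filter.mpr ⟨Finset.mem_univ O, h1, h2⟩, rfl⟩
  obtain ⟨O0, hO0, hO0x⟩ := Finset.mem_image.mp (S.max'_mem hSne)
  rw [Finset.mem_filter] at hO0
  refine ⟨x, ⟨⟨O0, hO0.2.1, hO0.2.2, hO0x⟩, hub⟩, ?_, ?_⟩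
  · obtain ⟨M, hM, hMs⟩ := scheme_to_matching hn v O0 hO0.2.1 hO0.2.2
    exact ⟨M, hM, by rw [hMs, hO0x]⟩
  · intro M hM
    obtain ⟨O, h1, h2, h3⟩ := matching_to_scheme hn v M hM
    rw [← h3]
    exact hub O h1 h2
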